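/- Let (W, b, ρ) be a radial neural network with L layers and widths vector n = (n₀, …, n_L), where each activation ρ_i = h_i^{(n_i)} for some h_i : ℝ → ℝ. Let n^red be the reduced widths vector of n. Then there exist weights W^red_i ∈ ℝ^{n^red_i × n^red_{i−1}} and biases b^red_i ∈ ℝ^{n^red_i} (i = 1, …, L), and orthogonal matrices Q_i ∈ O(n_i) (i = 1, …, L−1), such that for every i the i-th partial feedforward function satisfies F_i = Q_i ∘ inc_i ∘ F^red_i (with Q₀ = id, Q_L = id, inc_i : ℝ^{n^red_i} ↪ ℝ^{n_i} the standard inclusion), and in particular the feedforward function of the compressed radial neural network (W^red, b^red, ρ^red) with activations ρ^red_i = h_i^{(n^red_i)} equals the feedforward function of (W, b, ρ). -/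

import Mathlib

open scoped Classical
open Metric Set

noncomputable section

abbrev Euc (n : ℕ) := EuclideanSpace ℝ (Fin n)

def mulVecE {m n : ℕ} (W : Matrix (Fin m) (Fin n) ℝ) (v : Euc n) : Euc m :=
  WithLp.toLp 2 (fun j => ∑ k, W j k * v k)

/-- The radial rescaling function h⁽ᵏ⁾ : ℝᵏ → ℝᵏ associated to h : ℝ → ℝ,
v ↦ (h ‖v‖ / ‖v‖) • v for v ≠ 0, and 0 ↦ 0. -/
def radialRescale {n : ℕ} (h : ℝ → ℝ) (v : Euc n) : Euc n :=
  if v = 0 then 0 else (h ‖v‖ / ‖v‖) • v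

/-- The partial feedforward functions of a fully connected network with widths
width 0, width 1, …: F₀ = id and F_{i+1}(x) = ρᵢ(Wᵢ Fᵢ(x) + bᵢ).
(Activation ρ i, weights W i and biases b i belong to layer i+1.) -/
def feedforward (width : ℕ → ℕ)
    (W : ∀ i : ℕ, Matrix (Fin (width (i+1))) (Fin (width i)) ℝ)
    (b : ∀ i : ℕ, Euc (width (i+1)))
    (ρ : ∀ i : ℕ, Euc (width (i+1)) → Euc (width (i+1))) :
    (i : ℕ) → Euc (width 0) → Euc (width i)
  | 0 => fun x => x
  | (i+1) => fun x => ρ i (mulVecE (W i) (feedforward width W b ρ i x) + b i)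

/-- The reduced widths vector: nʳᵉᵈ₀ = n₀, nʳᵉᵈᵢ = min(nᵢ, nʳᵉᵈ_{i−1} + 1) for
0 < i < L, and nʳᵉᵈ_L = n_L. -/
def reducedWidth (width : ℕ → ℕ) (L : ℕ) : ℕ → ℕ
  | 0 => width 0
  | (i+1) => if i + 1 < L then min (width (i+1)) (reducedWidth width L i + 1) else width (i+1)

lemma reducedWidth_le (width : ℕ → ℕ) (L : ℕ) (i : ℕ) :
    reducedWidth width L i ≤ width i := by
  cases i with
  | zero => simp [reducedWidth]
  | succ i =>
    rw [reducedWidth]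
    split
    · exact min_le_left _ _
    · exact le_rfl

/-- The standard inclusion ℝᵏ ↪ ℝˡ into the first k coordinates. -/
def incl (k l : ℕ) (v : Euc k) : Euc l :=
  WithLp.toLp 2 (fun j => if h : (j : ℕ) < k then v ⟨j, h⟩ else 0)

lemma mulVecE_one {n : ℕ} (v : Euc n) : mulVecE (1 : Matrix (Fin n) (Fin n) ℝ) v = v := by
  ext j
  simp [mulVecE, Matrix.one_apply]

lemma incl_self {n : ℕ} (v : Euc n) : incl n n v = v := by
  ext j
  simp [incl]

lemma euc_apply_sum {n : ℕ} {ι : Type*} (s : Finset ι) (f : ι → Euc n) (j : Fin n) :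
    (∑ i ∈ s, f i) j = ∑ i ∈ s, f i j := by
  induction s using Finset.induction with
  | empty => rfl
  | insert a s h ih => simp_all [Finset.sum_insert h]

lemma euc_eq_sum_single {n : ℕ} (y : Euc n) :
    y = ∑ k, y k • (EuclideanSpace.single k (1:ℝ)) := by
  ext j
  rw [euc_apply_sum]
  simp [EuclideanSpace.single_apply]

lemma mulVecE_matrixOf {m n : ℕ} (f : Euc m →ₗ[ℝ] Euc n) (y : Euc m) :
    mulVecE (fun j k => f (EuclideanSpace.single k 1) j) y = f y := by
  conv_rhs => rw [euc_eq_sum_single y]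
  rw [map_sum]
  ext j
  simp only [mulVecE, WithLp.ofLp_toLp]
  rw [euc_apply_sum]
  congr 1
  funext k
  simp [mul_comm]
lemma inner_mulVecE {n : ℕ} {Q : Matrix (Fin n) (Fin n) ℝ}
    (hQ : Q.transpose * Q = 1) (x y : Euc n) :
    (inner ℝ (mulVecE Q x) (mulVecE Q y) : ℝ) = inner ℝ x y := by
  simp only [PiLp.inner_apply, RCLike.inner_apply', starRingEnd_apply, star_trivial, mulVecE,
    WithLp.ofLp_toLp]
  calc ∑ p, (∑ k, Q p k * x k) * (∑ l, Q p l * y l)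
      = ∑ p, ∑ k, ∑ l, (Q p k * Q p l) * (x k * y l) := by
        refine Finset.sum_congr rfl fun p _ => ?_
        rw [Finset.sum_mul_sum]
        refine Finset.sum_congr rfl fun k _ => Finset.sum_congr rfl fun l _ => by ring
    _ = ∑ k, ∑ l, (∑ p, Q p k * Q p l) * (x k * y l) := by
        rw [Finset.sum_comm]
        refine Finset.sum_congr rfl fun k _ => ?_
        rw [Finset.sum_comm]
        refine Finset.sum_congr rfl fun l _ => ?_
        rw [← Finset.sum_mul]
    _ = ∑ k, ∑ l, ((1 : Matrix (Fin n) (Fin n) ℝ) k l) * (x k * y l) := by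
        refine Finset.sum_congr rfl fun k _ => Finset.sum_congr rfl fun l _ => ?_
        rw [← hQ]
        simp [Matrix.mul_apply, Matrix.transpose_apply]
    _ = ∑ k, x k * y k := by
        refine Finset.sum_congr rfl fun k _ => ?_
        simp [Matrix.one_apply]

lemma norm_mulVecE {n : ℕ} {Q : Matrix (Fin n) (Fin n) ℝ}
    (hQ : Q.transpose * Q = 1) (x : Euc n) : ‖mulVecE Q x‖ = ‖x‖ := by
  have h := inner_mulVecE hQ x x
  rw [real_inner_self_eq_norm_mul_norm, real_inner_self_eq_norm_mul_norm] at h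
  nlinarith [norm_nonneg (mulVecE Q x), norm_nonneg x]

lemma norm_incl {k l : ℕ} (h : k ≤ l) (v : Euc k) : ‖incl k l v‖ = ‖v‖ := by
  rw [EuclideanSpace.norm_eq, EuclideanSpace.norm_eq]
  congr 1
  set vv : ℕ → ℝ := fun j => if hj : j < k then ‖v ⟨j, hj⟩‖ ^ 2 else 0 with hvv
  have h1 : ∑ j : Fin l, ‖incl k l v j‖ ^ 2 = ∑ j : Fin l, vv j := by
    refine Finset.sum_congr rfl fun j _ => ?_
    simp only [incl, hvv, WithLp.ofLp_toLp]
    split <;> simp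
  have h2 : ∑ j : Fin k, ‖v j‖ ^ 2 = ∑ j : Fin k, vv j := by
    refine Finset.sum_congr rfl fun j _ => ?_
    simp only [hvv]
    rw [dif_pos j.2]
  rw [h1, h2, Fin.sum_univ_eq_sum_range vv l, Fin.sum_univ_eq_sum_range vv k]
  refine (Finset.sum_subset (Finset.range_subset_range.2 h) fun j _ hj => ?_).symm
  rw [Finset.mem_range, not_lt] at hj
  simp only [hvv]
  rw [dif_neg (by omega)]
lemma mulVecE_smul {m n : ℕ} (Q : Matrix (Fin m) (Fin n) ℝ) (c : ℝ) (v : Euc n) :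
    mulVecE Q (c • v) = c • mulVecE Q v := by
  ext j
  simp only [mulVecE, PiLp.smul_apply, smul_eq_mul, Finset.mul_sum, WithLp.ofLp_toLp]
  exact Finset.sum_congr rfl fun k _ => by ring

lemma mulVecE_zero {m n : ℕ} (Q : Matrix (Fin m) (Fin n) ℝ) :
    mulVecE Q (0 : Euc n) = 0 := by
  ext j; simp [mulVecE]

lemma incl_smul {k l : ℕ} (c : ℝ) (v : Euc k) :
    incl k l (c • v) = c • incl k l v := by
  ext j
  simp only [incl, PiLp.smul_apply, smul_eq_mul, WithLp.ofLp_toLp]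
  split <;> simp

lemma incl_zero {k l : ℕ} : incl k l (0 : Euc k) = 0 := by
  ext j; simp [incl]

lemma radialRescale_comm {m n : ℕ} (h : ℝ → ℝ) (T : Euc m → Euc n)
    (hz : T 0 = 0) (hs : ∀ (c : ℝ) v, T (c • v) = c • T v)
    (hn : ∀ v, ‖T v‖ = ‖v‖) (v : Euc m) :
    radialRescale h (T v) = T (radialRescale h v) := by
  by_cases hv : v = 0
  · subst hv
    simp [radialRescale, hz]
  · have hTv : T v ≠ 0 := fun hc => hv (by
      have := hn v
      rw [hc, norm_zero] at this
      exact norm_eq_zero.mp this.symm)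
    rw [radialRescale, radialRescale, if_neg hv, if_neg hTv, hn v, hs]
lemma exists_step (m n r : ℕ) (hr : r ≤ n) (hcond : m + 1 ≤ r ∨ r = n)
    (f : Euc m →ₗ[ℝ] Euc n) (c : Euc n) :
    ∃ Q : Matrix (Fin n) (Fin n) ℝ,
      (Q ∈ Matrix.orthogonalGroup (Fin n) ℝ ∧ (r = n → Q = 1)) ∧
      ∃ (Wr : Matrix (Fin r) (Fin m) ℝ) (br : Euc r),
        ∀ y : Euc m, f y + c = mulVecE Q (incl r n (mulVecE Wr y + br)) := by
  by_cases hrn : r = n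
  · subst hrn
    refine ⟨1, ⟨?_, fun _ => rfl⟩, (fun j k => f (EuclideanSpace.single k 1) j), c, fun y => ?_⟩
    · rw [Matrix.mem_orthogonalGroup_iff]; simp
    · rw [mulVecE_matrixOf f y, incl_self, mulVecE_one]
  · have hm1 : m + 1 ≤ r := hcond.resolve_right hrn
    set S : Submodule ℝ (Euc n) := LinearMap.range f ⊔ (ℝ ∙ c) with hSdef
    have hdim : Module.finrank ℝ S ≤ r := by
      refine le_trans (Submodule.finrank_add_le_finrank_add_finrank _ _) ?_
      have h1 : Module.finrank ℝ (LinearMap.range f) ≤ m := by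
        simpa using f.finrank_range_le
      have h2 : Module.finrank ℝ (ℝ ∙ c) ≤ 1 := by
        simpa using finrank_span_le_card ({c} : Set (Euc n))
      omega
    set d : ℕ := Module.finrank ℝ S with hd
    set w : OrthonormalBasis (Fin d) ℝ S := stdOrthonormalBasis ℝ S with hw
    have hwo : Orthonormal ℝ (fun i : Fin d => (w i : Euc n)) := by
      constructor
      · intro i
        show ‖(w i : Euc n)‖ = 1
        rw [Submodule.norm_coe]
        exact w.orthonormal.1 i
      · intro i j hij
        show (inner ℝ ((w i : Euc n)) ((w j : Euc n)) : ℝ) = 0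
        rw [← Submodule.coe_inner]
        exact w.orthonormal.2 hij
    set v : Fin n → Euc n := fun j => if hj : (j : ℕ) < d then (w ⟨j, hj⟩ : Euc n) else 0 with hv
    set s : Set (Fin n) := {j | (j : ℕ) < d} with hs
    have hvo : Orthonormal ℝ (s.restrict v) := by
      have heq : s.restrict v = (fun i : Fin d => (w i : Euc n)) ∘
          (fun j : s => (⟨(j : Fin n), j.2⟩ : Fin d)) := by
        funext j
        simp only [Set.restrict_apply, hv, Function.comp_apply]
        exact dif_pos j.2
      rw [heq]
      refine hwo.comp _ ?_
      intro a b hab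
      have h0 := congrArg Fin.val hab
      exact Subtype.ext (Fin.ext (by simpa using h0))
    obtain ⟨B, hB⟩ := hvo.exists_orthonormalBasis_extension_of_card_eq
      (by simp [finrank_euclideanSpace_fin])
    have hspan : S = Submodule.span ℝ (Set.range (fun i : Fin d => (w i : Euc n))) := by
      have h1 : Submodule.span ℝ (Set.range w.toBasis) = (⊤ : Submodule ℝ S) :=
        w.toBasis.span_eq
      have h2 := congrArg (Submodule.map S.subtype) h1
      rw [Submodule.map_span, Submodule.map_subtype_top, ← Set.range_comp] at h2
      have h3 : (Set.range (⇑S.subtype ∘ ⇑w.toBasis))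
          = (Set.range fun i : Fin d => (w i : Euc n)) := by
        congr 1
      rw [h3] at h2
      exact h2.symm
    have horth : ∀ (j : Fin n), r ≤ (j : ℕ) → ∀ x ∈ S, (inner ℝ (B j) x : ℝ) = 0 := by
      intro j hj x hx
      rw [hspan] at hx
      induction hx using Submodule.span_induction with
      | mem x hxm =>
        obtain ⟨i, rfl⟩ := hxm
        have hid : (i : ℕ) < d := i.2
        have hBi : B ⟨(i : ℕ), lt_of_lt_of_le hid (le_trans hdim hr)⟩ = (w i : Euc n) := by
          have hmem : (⟨(i : ℕ), lt_of_lt_of_le hid (le_trans hdim hr)⟩ : Fin n) ∈ s := by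
            simpa [hs] using hid
          rw [hB _ hmem]
          simp only [hv]
          exact dif_pos hid
        show (inner ℝ (B j) ((w i : Euc n)) : ℝ) = 0
        rw [← hBi]
        refine B.orthonormal.2 ?_
        intro hc
        apply absurd hj
        rw [hc]
        simp only [not_le]
        omega
      | zero => simp
      | add x y hx hy ihx ihy => rw [inner_add_right, ihx, ihy, add_zero]
      | smul a x hx ihx => rw [inner_smul_right, ihx, mul_zero]
    set Wr : Matrix (Fin r) (Fin m) ℝ :=
      fun j k => (inner ℝ (B (Fin.castLE hr j)) (f (EuclideanSpace.single k 1)) : ℝ) with hWr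
    set br : Euc r := WithLp.toLp 2 (fun j => (inner ℝ (B (Fin.castLE hr j)) c : ℝ)) with hbr
    refine ⟨(fun p k => B k p), ⟨?_, fun hc => absurd hc hrn⟩, Wr, br, ?_⟩
    · refine (Matrix.mem_orthogonalGroup_iff' (Fin n) ℝ).mpr ?_
      ext k l
      simp only [Matrix.mul_apply, Matrix.one_apply, Matrix.star_apply, star_trivial, Matrix.transpose_apply]
      have hite := orthonormal_iff_ite.mp B.orthonormal k l
      rw [← hite]
      simp [PiLp.inner_apply, RCLike.inner_apply, starRingEnd_apply, star_trivial,
        Matrix.mul_apply, Matrix.transpose_apply, mul_comm]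
      rfl
    · intro y
      have hxS : f y + c ∈ S := by
        refine Submodule.add_mem _ ?_ ?_
        · exact Submodule.mem_sup_left (LinearMap.mem_range_self f y)
        · exact Submodule.mem_sup_right (Submodule.mem_span_singleton_self c)
      have hrepr := B.sum_repr' (f y + c)
      have hcoef : ∀ jr : Fin r,
          (mulVecE Wr y + br) jr = (inner ℝ (B (Fin.castLE hr jr)) (f y + c) : ℝ) := by
        intro jr
        have happ : (mulVecE Wr y + br) jr = (∑ k, Wr jr k * y k) + br jr := rfl
        rw [happ]
        have hfy : f y = ∑ k, y k • f (EuclideanSpace.single k 1) := by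
          conv_lhs => rw [euc_eq_sum_single y]
          rw [map_sum]
          exact Finset.sum_congr rfl fun k _ => by rw [map_smul]
        rw [inner_add_right, hfy, inner_sum]
        simp only [real_inner_smul_right]
        congr 1
        exact Finset.sum_congr rfl fun k _ => by rw [hWr]; ring
      ext p
      have hL : (f y + c) p = ∑ k : Fin n, (inner ℝ (B k) (f y + c) : ℝ) * B k p := by
        conv_lhs => rw [← hrepr]
        rw [euc_apply_sum]
        refine Finset.sum_congr rfl fun k _ => ?_
        simp [mul_comm]
      rw [hL]
      show _ = ∑ k : Fin n, B k p * (incl r n (mulVecE Wr y + br) k)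
      refine Finset.sum_congr rfl fun k _ => ?_
      simp only [incl]
      by_cases hk : (k : ℕ) < r
      · rw [dif_pos hk, hcoef ⟨(k : ℕ), hk⟩]
        have hcast : Fin.castLE hr (⟨(k : ℕ), hk⟩ : Fin r) = k := by
          ext; rfl
        rw [hcast, mul_comm]
      · rw [dif_neg hk, horth k (le_of_not_gt hk) _ hxS, mul_zero, zero_mul]
lemma mulVecE_add {m n : ℕ} (A : Matrix (Fin m) (Fin n) ℝ) (u v : Euc n) :
    mulVecE A (u + v) = mulVecE A u + mulVecE A v := by
  ext j
  show ∑ k, A j k * (u k + v k) = (∑ k, A j k * u k) + ∑ k, A j k * v k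
  rw [← Finset.sum_add_distrib]
  exact Finset.sum_congr rfl fun k _ => by ring

lemma incl_add {k l : ℕ} (u v : Euc k) :
    incl k l (u + v) = incl k l u + incl k l v := by
  ext j
  show _ = incl k l u j + incl k l v j
  simp only [incl, WithLp.ofLp_toLp]
  split <;> simp

lemma orth_transpose {n : ℕ} {Q : Matrix (Fin n) (Fin n) ℝ}
    (h : Q ∈ Matrix.orthogonalGroup (Fin n) ℝ) : Q.transpose * Q = 1 := by
  have h1 : star Q * Q = 1 := Matrix.mem_unitaryGroup_iff'.mp h
  rw [Matrix.star_eq_conjTranspose] at h1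
  rw [← h1]
  congr 1

/-- The affine-part linear map at layer i, relative to an orthogonal change of basis Q. -/
def stepMap (L : ℕ) (width : ℕ → ℕ)
    (W : ∀ i : ℕ, Matrix (Fin (width (i+1))) (Fin (width i)) ℝ) (i : ℕ)
    (Q : Matrix (Fin (width i)) (Fin (width i)) ℝ) :
    Euc (reducedWidth width L i) →ₗ[ℝ] Euc (width (i+1)) where
  toFun y := mulVecE (W i) (mulVecE Q (incl (reducedWidth width L i) (width i) y))
  map_add' u v := by beta_reduce; rw [incl_add, mulVecE_add, mulVecE_add]
  map_smul' c v := by rw [incl_smul, mulVecE_smul, mulVecE_smul]; rfl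

lemma rw_cond (L : ℕ) (width : ℕ → ℕ) (i : ℕ) :
    reducedWidth width L i + 1 ≤ reducedWidth width L (i+1) ∨
      reducedWidth width L (i+1) = width (i+1) := by
  rw [reducedWidth]
  split
  · rcases le_total (width (i+1)) (reducedWidth width L i + 1) with hc | hc
    · right; exact min_eq_left hc
    · left; rw [min_eq_right hc]
  · right; rfl

lemma rw_last (L : ℕ) (width : ℕ → ℕ) : reducedWidth width L L = width L := by
  cases L with
  | zero => rfl
  | succ i => rw [reducedWidth, if_neg (lt_irrefl _)]

noncomputable def chainQ (L : ℕ) (width : ℕ → ℕ)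
    (W : ∀ i : ℕ, Matrix (Fin (width (i+1))) (Fin (width i)) ℝ)
    (b : ∀ i : ℕ, Euc (width (i+1))) :
    ∀ i : ℕ, Σ' Q : Matrix (Fin (width i)) (Fin (width i)) ℝ,
      Q ∈ Matrix.orthogonalGroup (Fin (width i)) ℝ ∧
        (reducedWidth width L i = width i → Q = 1)
  | 0 => ⟨1, by rw [Matrix.mem_orthogonalGroup_iff]; simp, fun _ => rfl⟩
  | (i+1) =>
      ⟨(exists_step (reducedWidth width L i) (width (i+1)) (reducedWidth width L (i+1))
          (reducedWidth_le width L (i+1)) (rw_cond L width i)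
          (stepMap L width W i (chainQ L width W b i).1) (b i)).choose,
       (exists_step (reducedWidth width L i) (width (i+1)) (reducedWidth width L (i+1))
          (reducedWidth_le width L (i+1)) (rw_cond L width i)
          (stepMap L width W i (chainQ L width W b i).1) (b i)).choose_spec.1⟩

noncomputable def stepEx (L : ℕ) (width : ℕ → ℕ)
    (W : ∀ i : ℕ, Matrix (Fin (width (i+1))) (Fin (width i)) ℝ)
    (b : ∀ i : ℕ, Euc (width (i+1))) (i : ℕ) :=
  exists_step (reducedWidth width L i) (width (i+1)) (reducedWidth width L (i+1))
    (reducedWidth_le width L (i+1)) (rw_cond L width i)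
    (stepMap L width W i (chainQ L width W b i).1) (b i)

lemma chainQ_succ (L : ℕ) (width : ℕ → ℕ)
    (W : ∀ i : ℕ, Matrix (Fin (width (i+1))) (Fin (width i)) ℝ)
    (b : ∀ i : ℕ, Euc (width (i+1))) (i : ℕ) :
    (chainQ L width W b (i+1)).1 = (stepEx L width W b i).choose := by
  rw [chainQ]

noncomputable def Wred (L : ℕ) (width : ℕ → ℕ)
    (W : ∀ i : ℕ, Matrix (Fin (width (i+1))) (Fin (width i)) ℝ)
    (b : ∀ i : ℕ, Euc (width (i+1))) (i : ℕ) :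
    Matrix (Fin (reducedWidth width L (i+1))) (Fin (reducedWidth width L i)) ℝ :=
  ((stepEx L width W b i).choose_spec.2).choose

noncomputable def bred (L : ℕ) (width : ℕ → ℕ)
    (W : ∀ i : ℕ, Matrix (Fin (width (i+1))) (Fin (width i)) ℝ)
    (b : ∀ i : ℕ, Euc (width (i+1))) (i : ℕ) :
    Euc (reducedWidth width L (i+1)) :=
  ((stepEx L width W b i).choose_spec.2).choose_spec.choose

lemma step_key (L : ℕ) (width : ℕ → ℕ)
    (W : ∀ i : ℕ, Matrix (Fin (width (i+1))) (Fin (width i)) ℝ)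
    (b : ∀ i : ℕ, Euc (width (i+1))) (i : ℕ) (y : Euc (reducedWidth width L i)) :
    mulVecE (W i) (mulVecE (chainQ L width W b i).1
        (incl (reducedWidth width L i) (width i) y)) + b i
      = mulVecE (chainQ L width W b (i+1)).1
          (incl (reducedWidth width L (i+1)) (width (i+1))
            (mulVecE (Wred L width W b i) y + bred L width W b i)) := by
  rw [chainQ_succ]
  exact ((stepEx L width W b i).choose_spec.2).choose_spec.choose_spec y

lemma main_ind (L : ℕ) (width : ℕ → ℕ)
    (W : ∀ i : ℕ, Matrix (Fin (width (i+1))) (Fin (width i)) ℝ)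
    (b : ∀ i : ℕ, Euc (width (i+1))) (h : ℕ → ℝ → ℝ) :
    ∀ (i : ℕ) (x : Euc (width 0)),
      feedforward width W b (fun i => radialRescale (h i)) i x
        = mulVecE (chainQ L width W b i).1
            (incl (reducedWidth width L i) (width i)
              (feedforward (reducedWidth width L) (Wred L width W b) (bred L width W b)
                (fun i => radialRescale (h i)) i x))
  | 0, x => by
      show x = mulVecE (1 : Matrix (Fin (width 0)) (Fin (width 0)) ℝ)
        (incl (width 0) (width 0) x)
      rw [incl_self, mulVecE_one]
  | (i+1), x => by
      rw [feedforward, feedforward]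
      beta_reduce
      rw [main_ind L width W b h i x, step_key]
      have hQ := orth_transpose (chainQ L width W b (i+1)).2.1
      rw [radialRescale_comm (h i) _ (mulVecE_zero _) (mulVecE_smul _) (norm_mulVecE hQ),
        radialRescale_comm (h i) _ incl_zero incl_smul
          (norm_incl (reducedWidth_le width L (i+1)))]

/-- **model compression.** Let (W, b, ρ) be a radial neural network with
L layers, widths n₀, …, n_L and activations ρᵢ = hᵢ^{(nᵢ)}.  Then there exist reduced
weights and biases, and orthogonal matrices Qᵢ ∈ O(nᵢ) with Q₀ = 1 and Q_L = 1, such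
that each partial feedforward function satisfies Fᵢ = Qᵢ ∘ incᵢ ∘ Fʳᵉᵈᵢ, where the
reduced network has widths nʳᵉᵈ and activations hᵢ^{(nʳᵉᵈᵢ)}; in particular (taking
i = L, where nʳᵉᵈ_L = n_L and Q_L = 1) the two feedforward functions coincide. -/
theorem model_compression (L : ℕ) (width : ℕ → ℕ)
    (W : ∀ i : ℕ, Matrix (Fin (width (i+1))) (Fin (width i)) ℝ)
    (b : ∀ i : ℕ, Euc (width (i+1)))
    (h : ℕ → ℝ → ℝ) :
    ∃ (Wred : ∀ i : ℕ, Matrix (Fin (reducedWidth width L (i+1))) (Fin (reducedWidth width L i)) ℝ)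
      (bred : ∀ i : ℕ, Euc (reducedWidth width L (i+1)))
      (Q : ∀ i : ℕ, Matrix (Fin (width i)) (Fin (width i)) ℝ),
      (∀ i, Q i ∈ Matrix.orthogonalGroup (Fin (width i)) ℝ) ∧
      Q 0 = 1 ∧ Q L = 1 ∧
      (∀ i ≤ L, ∀ x : Euc (width 0),
        feedforward width W b (fun i => radialRescale (h i)) i x
          = mulVecE (Q i) (incl (reducedWidth width L i) (width i)
              (feedforward (reducedWidth width L) Wred bred
                (fun i => radialRescale (h i)) i x))) ∧
      (∀ x : Euc (width 0),
        feedforward width W b (fun i => radialRescale (h i)) L x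
          = incl (reducedWidth width L L) (width L)
              (feedforward (reducedWidth width L) Wred bred
                (fun i => radialRescale (h i)) L x)) := by
  refine ⟨Wred L width W b, bred L width W b, fun i => (chainQ L width W b i).1,
    fun i => (chainQ L width W b i).2.1, rfl,
    (chainQ L width W b L).2.2 (rw_last L width), ?_, ?_⟩
  · intro i _ x
    exact main_ind L width W b h i x
  · intro x
    rw [main_ind L width W b h L x, (chainQ L width W b L).2.2 (rw_last L width), mulVecE_one]

end
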